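/- Let D = {(r,m) : r ∈ (0,1), 0 ≤ m < c_v·e^{-1-c₊·r}} and for (r,m) ∈ D let Θ(r,m) denote the unique s in the half-open interval (s₋(r), s̄(r)] with λ(r,s) = -m, where s₋(r) = e^{-1-c₊·r} and s̄(r) = e^{-c₊·r}. Then the map Θ : D → ℝ is continuous. -/

import Mathlib

lemma stmt10_mono (c0 cv r : ℝ) (hcv : 0 < cv) :
    StrictMonoOn (fun s : ℝ => c0 * r * s + cv * s * Real.log s)
      (Set.Ici (Real.exp (-1 - (c0 / cv) * r))) := by
  have hpos : (0:ℝ) < Real.exp (-1 - (c0 / cv) * r) := Real.exp_pos _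
  apply strictMonoOn_of_deriv_pos (convex_Ici _)
  · apply ContinuousOn.add
    · exact (continuous_const.mul continuous_id).continuousOn
    · apply ContinuousOn.mul
      · exact (continuous_const.mul continuous_id).continuousOn
      · apply Real.continuousOn_log.mono
        intro x hx
        simp only [Set.mem_Ici] at hx
        simp only [Set.mem_compl_iff, Set.mem_singleton_iff]
        intro h; rw [h] at hx; linarith
  · intro x hx
    rw [interior_Ici] at hx
    have hx0 : 0 < x := lt_trans hpos hx
    have h1 : HasDerivAt (fun s : ℝ => s * Real.log s) (Real.log x + 1) x := by
      have := (hasDerivAt_id x).mul (Real.hasDerivAt_log (ne_of_gt hx0))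
      exact this.congr_deriv (by simp [mul_inv_cancel₀ (ne_of_gt hx0)])
    have h2 : HasDerivAt (fun s : ℝ => c0 * r * s) (c0 * r) x := by
      simpa using (hasDerivAt_id x).const_mul (c0 * r)
    have hd : HasDerivAt (fun s : ℝ => c0 * r * s + cv * s * Real.log s)
        (c0 * r + cv * (Real.log x + 1)) x := by
      have key := h2.add (h1.const_mul cv)
      exact key.congr_of_eventuallyEq (Filter.Eventually.of_forall fun s => by simp [mul_assoc])
    rw [hd.deriv]
    have hlog : -1 - (c0 / cv) * r < Real.log x := by
      rw [← Real.log_exp (-1 - (c0 / cv) * r)]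
      exact Real.log_lt_log hpos hx
    have h3 : cv * (-1 - (c0 / cv) * r) < cv * Real.log x :=
      (mul_lt_mul_iff_right₀ hcv).mpr hlog
    have hcc : cv * ((c0 / cv) * r) = c0 * r := by
      field_simp
    nlinarith [h3, hcc]

/-- On `D = {(r,m) : r ∈ (0,1), 0 ≤ m < c_v e^{-1-c₊ r}}`, the map `Θ` sending `(r,m)`
to the unique `s ∈ (s₋(r), s̄(r)]` with `λ(r,s) = -m` is continuous. -/
theorem stmt10 (c0 cv : ℝ) (hc0 : 0 < c0) (hcv : 0 < cv)
    (Θ : ℝ → ℝ → ℝ)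
    (hΘ : ∀ r m : ℝ, r ∈ Set.Ioo (0:ℝ) 1 → 0 ≤ m →
        m < cv * Real.exp (-1 - (c0 / cv) * r) →
        Θ r m ∈ Set.Ioc (Real.exp (-1 - (c0 / cv) * r)) (Real.exp (-(c0 / cv) * r)) ∧
        c0 * r * Θ r m + cv * Θ r m * Real.log (Θ r m) = -m) :
    ContinuousOn (fun p : ℝ × ℝ => Θ p.1 p.2)
      {p : ℝ × ℝ | p.1 ∈ Set.Ioo (0:ℝ) 1 ∧ 0 ≤ p.2 ∧
        p.2 < cv * Real.exp (-1 - (c0 / cv) * p.1)} := by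
  set D := {p : ℝ × ℝ | p.1 ∈ Set.Ioo (0:ℝ) 1 ∧ 0 ≤ p.2 ∧
        p.2 < cv * Real.exp (-1 - (c0 / cv) * p.1)} with hD
  intro p hp
  obtain ⟨hr, hm0, hm1⟩ := hp
  obtain ⟨hmem, heq⟩ := hΘ p.1 p.2 hr hm0 hm1
  set s₀ := Θ p.1 p.2 with hs₀
  set a := Real.exp (-1 - (c0 / cv) * p.1) with ha
  have hslow : a < s₀ := hmem.1
  rw [ContinuousWithinAt, Metric.tendsto_nhds]
  intro ε hε
  set ε' := min (ε / 2) ((s₀ - a) / 2) with hε'def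
  have hε'pos : 0 < ε' := lt_min (by linarith) (by linarith)
  have hε'le : ε' ≤ ε / 2 := min_le_left _ _
  have hAgt : a < s₀ - ε' := by
    have := min_le_right (ε / 2) ((s₀ - a) / 2)
    rw [← hε'def] at this
    linarith
  set A := s₀ - ε' with hA
  set B := s₀ + ε' with hB
  -- eventual facts in 𝓝 p
  have hcont1 : ContinuousAt (fun q : ℝ × ℝ => Real.exp (-1 - (c0 / cv) * q.1)) p := by
    fun_prop
  have F1 : ∀ᶠ q : ℝ × ℝ in nhds p, Real.exp (-1 - (c0 / cv) * q.1) < A :=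
    hcont1.eventually_lt_const hAgt
  have hAmem : A ∈ Set.Ici a := le_of_lt hAgt
  have hs₀mem : s₀ ∈ Set.Ici a := le_of_lt hslow
  have hBmem : B ∈ Set.Ici a := by
    simp only [Set.mem_Ici]; linarith
  have hfA : c0 * p.1 * A + cv * A * Real.log A < -p.2 := by
    have := stmt10_mono c0 cv p.1 hcv hAmem hs₀mem (by linarith : A < s₀)
    simpa [heq] using this
  have hfB : -p.2 < c0 * p.1 * B + cv * B * Real.log B := by
    have := stmt10_mono c0 cv p.1 hcv hs₀mem hBmem (by linarith : s₀ < B)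
    simpa [heq] using this
  have hcont2 : ContinuousAt
      (fun q : ℝ × ℝ => c0 * q.1 * A + cv * A * Real.log A + q.2) p := by
    fun_prop
  have F2 : ∀ᶠ q : ℝ × ℝ in nhds p,
      c0 * q.1 * A + cv * A * Real.log A + q.2 < 0 :=
    hcont2.eventually_lt_const (by dsimp only; linarith)
  have hcont3 : ContinuousAt
      (fun q : ℝ × ℝ => c0 * q.1 * B + cv * B * Real.log B + q.2) p := by
    fun_prop
  have F3 : ∀ᶠ q : ℝ × ℝ in nhds p,
      0 < c0 * q.1 * B + cv * B * Real.log B + q.2 :=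
    hcont3.eventually_const_lt (by dsimp only; linarith)
  have F1' := F1.filter_mono (nhdsWithin_le_nhds (s := D))
  have F2' := F2.filter_mono (nhdsWithin_le_nhds (s := D))
  have F3' := F3.filter_mono (nhdsWithin_le_nhds (s := D))
  filter_upwards [F1', F2', F3', eventually_mem_nhdsWithin] with q hq1 hq2 hq3 hqD
  obtain ⟨hqr, hqm0, hqm1⟩ := hqD
  obtain ⟨hsq_mem, hsq_eq⟩ := hΘ q.1 q.2 hqr hqm0 hqm1
  set s := Θ q.1 q.2 with hs
  have hsmem : s ∈ Set.Ici (Real.exp (-1 - (c0 / cv) * q.1)) := le_of_lt hsq_mem.1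
  have hAmem' : A ∈ Set.Ici (Real.exp (-1 - (c0 / cv) * q.1)) := le_of_lt hq1
  have hBmem' : B ∈ Set.Ici (Real.exp (-1 - (c0 / cv) * q.1)) := by
    simp only [Set.mem_Ici]
    have : A < B := by simp only [hA, hB]; linarith
    linarith [hq1]
  have hlt1 : A < s := by
    rw [← (stmt10_mono c0 cv q.1 hcv).lt_iff_lt hAmem' hsmem]
    rw [hsq_eq]
    linarith
  have hlt2 : s < B := by
    rw [← (stmt10_mono c0 cv q.1 hcv).lt_iff_lt hsmem hBmem']
    rw [hsq_eq]
    linarith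
  rw [Real.dist_eq, abs_lt]
  constructor
  · simp only [hA] at hlt1; linarith
  · simp only [hB] at hlt2; linarith
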